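/- Let B ∈ ℝ^{3N×K} be a matrix (shape basis) and for each i let P_i = R_i · mat(B c_i) ∈ ℝ^{3×N} where R_i ∈ SO(3), c_i ∈ ℝᴷ, and mat reshapes a 3N-vector into a 3×N matrix column-major. Then the matrix W ∈ ℝ^{3F×N} obtained by stacking P_1, …, P_F vertically has rank at most 3K. -/

import Mathlib

/-- Reshape a `3N`-vector into a `3 × N` matrix (column-major). -/
def matReshape (N : ℕ) (v : Fin (3 * N) → ℝ) : Matrix (Fin 3) (Fin N) ℝ :=
  fun a j => v ⟨3 * j.val + a.val, by have := a.isLt; have := j.isLt; omega⟩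

theorem low_rank_shape_basis (F N K : ℕ)
    (B : Matrix (Fin (3 * N)) (Fin K) ℝ)
    (R : Fin F → Matrix (Fin 3) (Fin 3) ℝ)
    (hR : ∀ i, R i ∈ Matrix.specialOrthogonalGroup (Fin 3) ℝ)
    (c : Fin F → (Fin K → ℝ))
    (W : Matrix (Fin F × Fin 3) (Fin N) ℝ)
    (hW : ∀ i a j, W (i, a) j = (R i * matReshape N (B.mulVec (c i))) a j) :
    W.rank ≤ 3 * K := by
  set L : Matrix (Fin F × Fin 3) (Fin 3 × Fin K) ℝ :=
    fun p q => R p.1 p.2 q.1 * c p.1 q.2 with hL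
  set S : Matrix (Fin 3 × Fin K) (Fin N) ℝ :=
    fun q j => B ⟨3 * j.val + q.1.val, by have := q.1.isLt; have := j.isLt; omega⟩ q.2 with hS
  have hWeq : W = L * S := by
    ext ⟨i, a⟩ j
    rw [hW]
    rw [Matrix.mul_apply (M := L)]
    simp only [Matrix.mul_apply, matReshape, Matrix.mulVec, hL, hS, dotProduct,
      Fintype.sum_prod_type, Finset.mul_sum]
    refine Finset.sum_congr rfl fun b _ => Finset.sum_congr rfl fun k _ => by ring
  rw [hWeq]
  calc (L * S).rank ≤ S.rank := Matrix.rank_mul_le_right L S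
    _ ≤ Fintype.card (Fin 3 × Fin K) := Matrix.rank_le_card_height S
    _ = 3 * K := by simp
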